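/- Let Ψ_min(λ) := √(1+λ²) / ((√(1+λ²)+λ)^{2/3} + (√(1+λ²)−λ)^{2/3} − 1) − 1 for λ ∈ ℝ. Then Ψ_min is an even function, Ψ_min(λ) > 0 for λ ≠ 0, and there exist constants c, C > 0 such that for all λ ∈ ℝ, c·min{λ², |λ|^{1/3}} ≤ Ψ_min(λ) ≤ C·min{λ², |λ|^{1/3}}. -/

import Mathlib

/-- The universal shape function near a small local minimum. -/
noncomputable def PsiMin (l : ℝ) : ℝ :=
  Real.sqrt (1 + l^2) /
    ((Real.sqrt (1 + l^2) + l) ^ ((2:ℝ)/3) +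
     (Real.sqrt (1 + l^2) - l) ^ ((2:ℝ)/3) - 1) - 1

lemma cube_rpow (x : ℝ) (hx : 0 ≤ x) : (x ^ ((1:ℝ)/3)) ^ (3:ℕ) = x := by
  rw [← Real.rpow_natCast (x ^ ((1:ℝ)/3)) 3, ← Real.rpow_mul hx]
  norm_num

lemma sq_third_rpow (x : ℝ) (hx : 0 ≤ x) : (x ^ ((1:ℝ)/3)) ^ (2:ℕ) = x ^ ((2:ℝ)/3) := by
  rw [← Real.rpow_natCast (x ^ ((1:ℝ)/3)) 2, ← Real.rpow_mul hx]
  norm_num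

lemma s_add_pos (l : ℝ) : 0 < Real.sqrt (1 + l^2) + l := by
  have hs2 : Real.sqrt (1+l^2)^2 = 1+l^2 := Real.sq_sqrt (by positivity)
  have hs0 : 0 ≤ Real.sqrt (1+l^2) := Real.sqrt_nonneg _
  nlinarith [sq_nonneg (Real.sqrt (1+l^2) + l)]

lemma psiMin_eq (l : ℝ) : PsiMin l =
    ((Real.sqrt (1 + l^2) + l) ^ ((1:ℝ)/3) - 1)^2 /
      (2 * (Real.sqrt (1 + l^2) + l) ^ ((1:ℝ)/3)) := by
  set s := Real.sqrt (1 + l^2) with hsdef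
  have h0 : (0:ℝ) ≤ 1 + l^2 := by positivity
  have hs2 : s^2 = 1 + l^2 := Real.sq_sqrt h0
  have hsl : 0 < s + l := s_add_pos l
  set u := (s + l) ^ ((1:ℝ)/3) with hudef
  have hu : 0 < u := Real.rpow_pos_of_pos hsl _
  have hu3 : u ^ (3:ℕ) = s + l := cube_rpow _ hsl.le
  have h23 : (s + l) ^ ((2:ℝ)/3) = u ^ 2 := (sq_third_rpow _ hsl.le).symm
  have hmul : (s - l) * (s + l) = 1 := by nlinarith
  have hinv : s - l = (s + l)⁻¹ := eq_inv_of_mul_eq_one_left hmul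
  have h23' : (s - l) ^ ((2:ℝ)/3) = (u ^ 2)⁻¹ := by
    rw [hinv, Real.inv_rpow hsl.le, h23]
  have hs_eq : s = (u ^ 3 + (u ^ 3)⁻¹) / 2 := by
    rw [hu3, ← hinv]; ring
  rw [PsiMin, ← hsdef, h23, h23', hs_eq]
  have h2 : u ^ 2 + (u ^ 2)⁻¹ - 1 = (u^4 - u^2 + 1) / u^2 := by
    field_simp; ring
  have h3 : (u ^ 3 + (u ^ 3)⁻¹) / 2 = (u^6 + 1) / (2 * u^3) := by
    field_simp
  have hq : 0 < u^4 - u^2 + 1 := by nlinarith [sq_nonneg (u^2 - 1)]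
  rw [h2, h3, div_div_div_eq]
  rw [div_sub_one (by positivity), div_eq_div_iff (by positivity) (by positivity)]
  ring

lemma psiMin_neg (l : ℝ) : PsiMin (-l) = PsiMin l := by
  have h0 : (0:ℝ) ≤ 1 + l^2 := by positivity
  have hs2 : Real.sqrt (1+l^2)^2 = 1 + l^2 := Real.sq_sqrt h0
  have hsl : 0 < Real.sqrt (1+l^2) + l := s_add_pos l
  rw [psiMin_eq, psiMin_eq, neg_sq]
  set s := Real.sqrt (1 + l^2)
  have hmul : (s - l) * (s + l) = 1 := by nlinarith
  have hinv : s + -l = (s + l)⁻¹ := by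
    rw [show s + -l = s - l by ring]; exact eq_inv_of_mul_eq_one_left hmul
  rw [hinv, Real.inv_rpow hsl.le]
  set u := (s + l) ^ ((1:ℝ)/3)
  have hu : 0 < u := Real.rpow_pos_of_pos hsl _
  rw [div_eq_div_iff (by positivity) (by positivity)]
  field_simp
  ring

lemma bounds_nonneg (l : ℝ) (hl : 0 ≤ l) :
    (1/196) * min (l^2) (l ^ ((1:ℝ)/3)) ≤ PsiMin l ∧
    PsiMin l ≤ 2 * min (l^2) (l ^ ((1:ℝ)/3)) := by
  rw [psiMin_eq]
  have h0 : (0:ℝ) ≤ 1 + l^2 := by positivity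
  set s := Real.sqrt (1 + l^2) with hsdef
  have hsl : 0 < s + l := s_add_pos l
  set u := (s + l) ^ ((1:ℝ)/3) with hudef
  have hu : 0 < u := Real.rpow_pos_of_pos hsl _
  have hu3 : u ^ (3:ℕ) = s + l := cube_rpow _ hsl.le
  have hs1 : 1 ≤ s := by
    have := Real.sqrt_le_sqrt (show (1:ℝ) ≤ 1 + l^2 by nlinarith)
    rwa [Real.sqrt_one] at this
  have hs_up : s ≤ 1 + l := by
    have := Real.sqrt_le_sqrt (show 1 + l^2 ≤ (1+l)^2 by nlinarith)
    rwa [Real.sqrt_sq (by linarith)] at this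
  have hl1 : 1 + l ≤ u ^ 3 := by rw [hu3]; linarith
  have hl2 : u ^ 3 ≤ 1 + 2*l := by rw [hu3]; linarith
  have hu1 : 1 ≤ u := by
    have := (pow_le_pow_iff_left₀ (by norm_num : (0:ℝ) ≤ 1) hu.le
      (by norm_num : 3 ≠ 0)).1 (by rw [one_pow]; linarith)
    exact this
  rcases le_or_gt l 1 with hc | hc
  · -- small l : min = l^2
    have hmin : min (l^2) (l ^ ((1:ℝ)/3)) = l^2 := by
      rcases eq_or_lt_of_le hl with h | h
      · simp [← h, Real.zero_rpow (by norm_num : ((1:ℝ)/3) ≠ 0)]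
      · apply min_eq_left
        have h2 : l ^ ((2:ℕ):ℝ) ≤ l ^ ((1:ℝ)/3) :=
          Real.rpow_le_rpow_of_exponent_ge h hc (by norm_num)
        rwa [Real.rpow_natCast] at h2
    rw [hmin]
    have hul : u - 1 ≤ l := by
      nlinarith [mul_nonneg (sq_nonneg (u - 1)) (show (0:ℝ) ≤ u + 2 by linarith)]
    have hu2 : u ≤ 2 := by
      exact (pow_le_pow_iff_left₀ hu.le (by norm_num) (by norm_num : 3 ≠ 0)).1
        (by norm_num; linarith)
    have hlow : l / 7 ≤ u - 1 := by
      nlinarith [mul_nonneg (sub_nonneg.2 hu1) (show (0:ℝ) ≤ 6 - u^2 - u by nlinarith)]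
    constructor
    · rw [le_div_iff₀ (by positivity)]
      nlinarith [mul_le_mul hlow hlow (by positivity) (by linarith),
        mul_le_mul_of_nonneg_left hu2 (sq_nonneg l)]
    · rw [div_le_iff₀ (by positivity)]
      nlinarith [mul_le_mul hul hul (by linarith) hl,
        mul_nonneg (sq_nonneg l) (show (0:ℝ) ≤ 4*u - 1 by linarith)]
  · -- large l : min = l^(1/3)
    have hlpos : 0 < l := by linarith
    set w := l ^ ((1:ℝ)/3) with hwdef
    have hw : 0 < w := Real.rpow_pos_of_pos hlpos _
    have hw3 : w ^ (3:ℕ) = l := cube_rpow _ hlpos.le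
    have hw1 : 1 ≤ w := by
      exact (pow_le_pow_iff_left₀ (by norm_num : (0:ℝ) ≤ 1) hw.le
        (by norm_num : 3 ≠ 0)).1 (by rw [one_pow]; linarith)
    have hmin : min (l^2) (l ^ ((1:ℝ)/3)) = w := by
      apply min_eq_right
      rw [← hwdef]
      nlinarith [mul_nonneg (mul_nonneg hw.le (sub_nonneg.2 hw1))
        (show (0:ℝ) ≤ w + 1 by linarith),
        mul_nonneg hlpos.le (show (0:ℝ) ≤ l - 1 by linarith)]
    rw [hmin]
    have huw : w ≤ u := by
      exact (pow_le_pow_iff_left₀ hw.le hu.le (by norm_num : 3 ≠ 0)).1 (by linarith)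
    have hu54 : 5/4 ≤ u := by
      exact (pow_le_pow_iff_left₀ (by norm_num : (0:ℝ) ≤ 5/4) hu.le
        (by norm_num : 3 ≠ 0)).1 (by norm_num; linarith)
    have hu2w : u ≤ 2 * w := by
      refine (pow_le_pow_iff_left₀ hu.le (by positivity) (by norm_num : 3 ≠ 0)).1 ?_
      have : (2*w)^3 = 8 * l := by rw [mul_pow, hw3]; norm_num
      rw [this]; linarith
    constructor
    · rw [le_div_iff₀ (by positivity)]
      have h5 : u/5 ≤ u - 1 := by linarith
      nlinarith [mul_le_mul h5 h5 (by positivity) (by linarith),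
        mul_le_mul_of_nonneg_left huw hu.le]
    · rw [div_le_iff₀ (by positivity)]
      nlinarith [mul_le_mul_of_nonneg_left hu2w hu.le]

theorem stmt_5 :
    (∀ l : ℝ, PsiMin (-l) = PsiMin l) ∧
    (∀ l : ℝ, l ≠ 0 → 0 < PsiMin l) ∧
    (∃ c C : ℝ, 0 < c ∧ 0 < C ∧ ∀ l : ℝ,
      c * min (l ^ 2) (|l| ^ ((1:ℝ)/3)) ≤ PsiMin l ∧
      PsiMin l ≤ C * min (l ^ 2) (|l| ^ ((1:ℝ)/3))) := by
  have hb : ∀ l : ℝ, (1/196) * min (l ^ 2) (|l| ^ ((1:ℝ)/3)) ≤ PsiMin l ∧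
      PsiMin l ≤ 2 * min (l ^ 2) (|l| ^ ((1:ℝ)/3)) := by
    intro l
    rcases le_or_gt 0 l with h | h
    · have := bounds_nonneg l h
      rwa [abs_of_nonneg h]
    · have := bounds_nonneg (-l) (by linarith)
      rw [psiMin_neg, neg_sq] at this
      rw [abs_of_neg h]
      exact this
  refine ⟨psiMin_neg, ?_, 1/196, 2, by norm_num, by norm_num, hb⟩
  intro l hl
  have h1 := (hb l).1
  have hpos : 0 < min (l ^ 2) (|l| ^ ((1:ℝ)/3)) := by
    apply lt_min
    · positivity
    · exact Real.rpow_pos_of_pos (abs_pos.mpr hl) _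
  nlinarith
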